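/- Suppose for each λ > 0, u_λ and v_λ are bounded solutions of λ u + A u = f on D (with respective nonlocal/local boundary conditions), f is symmetric (f(y,z) = f(-y,-z)), and the homogeneous equation λ w + A w = 0 in D, λ w + B₊ w = 0 in D⁺, λ w + B₋ w = 0 in D⁻ with continuous boundary values has solution space spanned by the function 1/λ - v_λ(·,·;1). If ũ_λ := u_λ - v_λ satisfies the homogeneous equations and the jump condition ũ_λ(0⁺,Y) - ũ_λ(0⁻,Y) = v_λ(0⁻,Y;f), then u_λ(y,z;f) = v_λ(y,z;f) + (v_λ(0⁻,Y;f)/v_λ(0⁻,Y;1)) · (1/λ - v_λ(y,z;1)), provided v_λ(0⁻,Y;1) ≠ 0 and v_λ(0⁺,Y;1) = 0. -/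
import Mathlib


open Real Set Filter Topology

/-- the key algebraic identity linking the nonlocal resolvent `u_λ`
to the short-cycle resolvent `v_λ`. `Hom` is the set of bounded solutions of the
homogeneous equations `λ w + A w = 0`, `λ w + B₊ w = 0`, `λ w + B₋ w = 0` with
continuous boundary values; it is assumed spanned by `1/λ - v_λ(·,·;1)`.
Boundary values at `0⁺`/`0⁻` are one-sided limits along the lines `z = Y`. -/
theorem stmt10 (Y l : ℝ) (hY : 0 < Y) (hl : 0 < l)
    (uL vLf v1 : ℝ → ℝ → ℝ)
    (Hom : (ℝ → ℝ → ℝ) → Prop)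
    (hspan : ∀ w, Hom w → ∃ C : ℝ, ∀ y z, w y z = C * (1 / l - v1 y z))
    (hhom : Hom fun y z => uL y z - vLf y z)
    (uYp uYm vfYm v1Ym : ℝ)
    (hup : Tendsto (fun y => uL y Y - vLf y Y) (𝓝[>] 0) (𝓝 uYp))
    (hum : Tendsto (fun y => uL y Y - vLf y Y) (𝓝[<] 0) (𝓝 uYm))
    (hvfm : Tendsto (fun y => vLf y Y) (𝓝[<] 0) (𝓝 vfYm))
    (hv1m : Tendsto (fun y => v1 y Y) (𝓝[<] 0) (𝓝 v1Ym))
    (hv1p : Tendsto (fun y => v1 y Y) (𝓝[>] 0) (𝓝 0))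
    (hjump : uYp - uYm = vfYm)
    (hne : v1Ym ≠ 0) :
    ∀ y z : ℝ, uL y z = vLf y z + (vfYm / v1Ym) * (1 / l - v1 y z) := by
  obtain ⟨C, hC⟩ := hspan _ hhom
  have h1 : Tendsto (fun y => uL y Y - vLf y Y) (𝓝[>] 0) (𝓝 (C * (1 / l - 0))) := by
    simp only [hC]
    exact tendsto_const_nhds.mul (tendsto_const_nhds.sub hv1p)
  have h2 : Tendsto (fun y => uL y Y - vLf y Y) (𝓝[<] 0) (𝓝 (C * (1 / l - v1Ym))) := by
    simp only [hC]
    exact tendsto_const_nhds.mul (tendsto_const_nhds.sub hv1m)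
  have e1 : uYp = C * (1 / l - 0) := tendsto_nhds_unique hup h1
  have e2 : uYm = C * (1 / l - v1Ym) := tendsto_nhds_unique hum h2
  have hCv : C * v1Ym = vfYm := by rw [e1, e2] at hjump; linarith [hjump]
  have hCeq : C = vfYm / v1Ym := by field_simp [hne]; linarith [hCv]
  intro y z
  have := hC y z
  rw [hCeq] at this
  linarith [this]
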